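/- Let P be a ground normal logic program whose dependence graph has no positive cycle. Then P has at most one stable model. -/
import Mathlib


/-- A rule of a ground normal logic program. -/
structure Rule (V : Type*) where
  head : V
  pbody : Finset V
  nbody : Finset V
deriving DecidableEq

variable {V : Type*} [DecidableEq V] [Fintype V]

/-- The body formula of a rule holds in state `x`. -/
def bodySat (r : Rule V) (x : V → Bool) : Prop :=
  (∀ p ∈ r.pbody, x p = true) ∧ (∀ p ∈ r.nbody, x p = false)

instance (r : Rule V) (x : V → Bool) : Decidable (bodySat r x) := by
  unfold bodySat; infer_instance

/-- The Boolean network encoding of a logic program. -/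
def enc (P : Finset (Rule V)) (v : V) (x : V → Bool) : Bool :=
  decide (∃ r ∈ P, r.head = v ∧ bodySat r x)

/-- Positive arc of the dependence graph. -/
def posDG (P : Finset (Rule V)) (u v : V) : Prop :=
  ∃ r ∈ P, r.head = v ∧ u ∈ r.pbody

/-- Negative arc of the dependence graph. -/
def negDG (P : Finset (Rule V)) (u v : V) : Prop :=
  ∃ r ∈ P, r.head = v ∧ u ∈ r.nbody

/-- Positive arc of the influence graph of a Boolean network. -/
def posIG (f : V → (V → Bool) → Bool) (u v : V) : Prop :=
  ∃ x : V → Bool, f v (Function.update x u false) = false ∧ f v (Function.update x u true) = true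

/-- Negative arc of the influence graph of a Boolean network. -/
def negIG (f : V → (V → Bool) → Bool) (u v : V) : Prop :=
  ∃ x : V → Bool, f v (Function.update x u false) = true ∧ f v (Function.update x u true) = false

/-- `y` is a Herbrand model of the reduct of `P` with respect to `x`. -/
def modelsReduct (P : Finset (Rule V)) (x y : V → Bool) : Prop :=
  ∀ r ∈ P, (∀ p ∈ r.nbody, x p = false) → (∀ p ∈ r.pbody, y p = true) → y r.head = true

/-- `x` is a stable model of `P`: it is the least Herbrand model of the reduct `P^x`. -/
def isStable (P : Finset (Rule V)) (x : V → Bool) : Prop :=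
  modelsReduct P x x ∧ ∀ y : V → Bool, modelsReduct P x y → ∀ v, x v = true → y v = true

/-- Signed directed walks: `SWalk pos neg u v s n` means there is a directed walk of
length `n` from `u` to `v` whose parity of negative arcs is `s` (`true` = odd). -/
inductive SWalk {V : Type*} (pos neg : V → V → Prop) : V → V → Bool → ℕ → Prop where
  | nil (u : V) : SWalk pos neg u u false 0
  | consPos {u v w : V} {s : Bool} {n : ℕ} :
      pos u v → SWalk pos neg v w s n → SWalk pos neg u w s (n + 1)
  | consNeg {u v w : V} {s : Bool} {n : ℕ} :
      neg u v → SWalk pos neg v w s n → SWalk pos neg u w (!s) (n + 1)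

lemma support {V : Type*} [DecidableEq V] [Fintype V] (P : Finset (Rule V))
    {x : V → Bool} (hx : isStable P x) {v : V} (hv : x v = true) :
    ∃ r ∈ P, r.head = v ∧ (∀ p ∈ r.pbody, x p = true) ∧ (∀ p ∈ r.nbody, x p = false) := by
  by_contra hcon
  push_neg at hcon
  have hy : modelsReduct P x (Function.update x v false) := by
    intro r hr hn hp
    by_cases hhead : r.head = v
    · obtain ⟨p, hp2, hp3⟩ := hcon r hr hhead (fun p hp' => by
        rcases eq_or_ne p v with rfl | hpv
        · exact hv
        · simpa [Function.update, hpv] using hp p hp')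
      exact absurd (hn p hp2) hp3
    · have : x r.head = true := hx.1 r hr hn (fun p hp' => by
        have h := hp p hp'
        rcases eq_or_ne p v with rfl | hpv
        · simp [Function.update] at h
        · simpa [Function.update, hpv] using h)
      simpa [Function.update, hhead] using this
  have := hx.2 _ hy v hv
  simp [Function.update] at this

lemma keyStep {V : Type*} [DecidableEq V] [Fintype V] (P : Finset (Rule V))
    {A B : V → Bool} (hA : isStable P A) (hB : isStable P B)
    {v : V} (hv : A v ≠ B v) :
    ∃ u, A u ≠ B u ∧ ((A u = A v ∧ posDG P u v) ∨ (A u ≠ A v ∧ negDG P u v)) := by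
  rcases Bool.eq_false_or_eq_true (A v) with hAv | hAv
  · -- A v = true, so B v = false
    have hBv : B v = false := by cases hBvb : B v <;> simp_all
    obtain ⟨r, hrP, hrh, hpb, hnb⟩ := support P hA hAv
    by_cases hall : ∀ p ∈ r.pbody, B p = true
    · by_cases hall2 : ∀ p ∈ r.nbody, B p = false
      · have := hB.1 r hrP hall2 hall
        rw [hrh] at this; simp_all
      · push_neg at hall2
        obtain ⟨p, hpmem, hpB⟩ := hall2
        have hpA' : A p = false := hnb p hpmem
        refine ⟨p, ?_, Or.inr ⟨by simp [hpA', hAv], ⟨r, hrP, hrh, hpmem⟩⟩⟩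
        have : B p = true := by cases h : B p <;> simp_all
        rw [hpA', this]; simp
    · push_neg at hall
      obtain ⟨p, hpmem, hpB⟩ := hall
      have hpA' : A p = true := hpb p hpmem
      refine ⟨p, ?_, Or.inl ⟨by simp [hpA', hAv], ⟨r, hrP, hrh, hpmem⟩⟩⟩
      have : B p = false := by cases h : B p <;> simp_all
      rw [hpA', this]; simp
  · -- A v = false, so B v = true
    have hBv : B v = true := by cases hBvb : B v <;> simp_all
    obtain ⟨r, hrP, hrh, hpb, hnb⟩ := support P hB hBv
    by_cases hall : ∀ p ∈ r.pbody, A p = true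
    · by_cases hall2 : ∀ p ∈ r.nbody, A p = false
      · have := hA.1 r hrP hall2 hall
        rw [hrh] at this; simp_all
      · push_neg at hall2
        obtain ⟨p, hpmem, hpA⟩ := hall2
        have hpA' : A p = true := by cases h : A p <;> simp_all
        refine ⟨p, ?_, Or.inr ⟨by simp [hpA', hAv], ⟨r, hrP, hrh, hpmem⟩⟩⟩
        rw [hpA', hnb p hpmem]; simp
    · push_neg at hall
      obtain ⟨p, hpmem, hpA⟩ := hall
      have hpA' : A p = false := by cases h : A p <;> simp_all
      refine ⟨p, ?_, Or.inl ⟨by simp [hpA', hAv], ⟨r, hrP, hrh, hpmem⟩⟩⟩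
      rw [hpA', hpb p hpmem]; simp

/-- if the dependence graph of `P` has no positive cycle, then `P` has at
most one stable model. -/
theorem stmt7 {V : Type*} [DecidableEq V] [Fintype V] (P : Finset (Rule V))
    (hnopos : ∀ (u : V) (n : ℕ), n ≠ 0 → ¬ SWalk (posDG P) (negDG P) u u false n) :
    ∀ A B : V → Bool, isStable P A → isStable P B → A = B := by
  intro A B hA hB
  by_contra hAB
  obtain ⟨v0, hv0⟩ := Function.ne_iff.mp hAB
  -- the set of disagreement vertices
  let D := {v : V // A v ≠ B v}
  -- choose a predecessor function
  have hstep : ∀ d : D, ∃ u : D,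
      ((A (u : V) = A (d : V) ∧ posDG P (u : V) (d : V)) ∨
       (A (u : V) ≠ A (d : V) ∧ negDG P (u : V) (d : V))) := by
    intro d
    obtain ⟨u, hu1, hu2⟩ := keyStep P hA hB d.2
    exact ⟨⟨u, hu1⟩, hu2⟩
  choose f hf using hstep
  -- walks along iterates of f
  have hwalk : ∀ (k : ℕ) (d : D),
      SWalk (posDG P) (negDG P) ((f^[k] d : D) : V) (d : V)
        (xor (A ((f^[k] d : D) : V)) (A (d : V))) k := by
    intro k
    induction k with
    | zero => intro d; simpa using SWalk.nil (pos := posDG P) (neg := negDG P) (d : V)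
    | succ k ih =>
      intro d
      rw [Function.iterate_succ_apply']
      set e := f^[k] d with he
      rcases hf e with ⟨heq, harc⟩ | ⟨hne, harc⟩
      · rw [heq]
        exact SWalk.consPos harc (ih d)
      · have hEq : xor (A ((f e : D) : V)) (A (d : V)) = (!(xor (A (e : V)) (A (d : V)))) := by
          revert hne
          cases hx : A ((f e : D) : V) <;> cases hy : A (e : V) <;> cases hz : A (d : V) <;> simp
        rw [hEq]
        exact SWalk.consNeg harc (ih d)
  -- pigeonhole on iterates
  have hD : Finite D := by
    have : Fintype D := by unfold D; infer_instance
    exact Finite.of_fintype D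
  have d0 : D := ⟨v0, hv0⟩
  obtain ⟨i, j, hij, heq⟩ := Finite.exists_ne_map_eq_of_infinite (fun n : ℕ => f^[n] d0)
  rcases lt_or_gt_of_ne hij with hlt | hlt
  all_goals {
    first
    | (have hkey := hwalk (j - i) (f^[i] d0)
       rw [← Function.iterate_add_apply, Nat.sub_add_cancel hlt.le, heq] at hkey)
    | (have hkey := hwalk (i - j) (f^[j] d0)
       rw [← Function.iterate_add_apply, Nat.sub_add_cancel hlt.le, ← heq] at hkey)
    simp only [Bool.xor_self] at hkey
    exact hnopos _ _ (by omega) hkey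
  }
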